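/- Let M and N be topological spaces with N connected and Hausdorff, and let F be a locally connected topological space with exactly m connected components, where m is a positive integer. Let f : M → N be a continuous surjection which is a locally trivial fiber bundle with fiber F (every point of N has an open neighborhood U together with a homeomorphism φ : f⁻¹(U) → U × F such that the composition of φ with the projection U × F → U agrees with f on f⁻¹(U)). Then there exist a topological space N', a continuous surjection g : M → N' all of whose fibers g⁻¹(x') are connected, and a covering map p : N' → N each of whose fibers has exactly m elements, such that f = p ∘ g. -/

import Mathlib

/-- `f : M → N` is a locally trivial fiber bundle with fiber `F`: every point of `N` has an
open neighborhood `U` together with a homeomorphism `φ : f⁻¹(U) ≃ₜ U × F` such that the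
composition of `φ` with the projection `U × F → U` agrees with `f` on `f⁻¹(U)`. -/
def IsLocTrivialBundle (F : Type*) [TopologicalSpace F] {M N : Type*}
    [TopologicalSpace M] [TopologicalSpace N] (f : M → N) : Prop :=
  ∀ y : N, ∃ U : Set N, IsOpen U ∧ y ∈ U ∧
    ∃ φ : (f ⁻¹' U) ≃ₜ U × F, ∀ x : f ⁻¹' U, ((φ x).1 : N) = f (x : M)

universe u v w

section Aux

/-- The setoid on `M` whose classes are the connected components of the fibers of `f`. -/
def fiberSetoid {M N : Type*} [TopologicalSpace M] (f : M → N) : Setoid M where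
  r x y := f x = f y ∧
    connectedComponentIn (f ⁻¹' {f x}) x = connectedComponentIn (f ⁻¹' {f x}) y
  iseqv := by
    constructor
    · exact fun x => ⟨rfl, rfl⟩
    · rintro x y ⟨h1, h2⟩
      refine ⟨h1.symm, ?_⟩
      rw [h1] at h2
      exact h2.symm
    · rintro x y z ⟨h1, h2⟩ ⟨h3, h4⟩
      refine ⟨h1.trans h3, ?_⟩
      rw [← h1] at h4
      exact h2.trans h4

theorem discrete_cc (α : Type*) [TopologicalSpace α] [LocallyConnectedSpace α] :
    DiscreteTopology (ConnectedComponents α) := by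
  rw [discreteTopology_iff_isOpen_singleton]
  intro c
  obtain ⟨t, rfl⟩ := ConnectedComponents.surjective_coe c
  rw [← ConnectedComponents.isQuotientMap_coe.isOpen_preimage]
  have h : (ConnectedComponents.mk : α → ConnectedComponents α) ⁻¹'
      {ConnectedComponents.mk t} = connectedComponent t :=
    connectedComponents_preimage_singleton
  rw [h]
  exact isOpen_connectedComponent

theorem homeo_cc_iff {α β : Type*} [TopologicalSpace α] [TopologicalSpace β] (e : α ≃ₜ β)
    (a b : α) : connectedComponent a = connectedComponent b ↔
      connectedComponent (e a) = connectedComponent (e b) := by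
  have key : ∀ {x y : α}, x ∈ connectedComponent y ↔ e x ∈ connectedComponent (e y) := by
    intro x y
    constructor
    · intro h
      exact e.continuous.image_connectedComponent_subset y ⟨x, h, rfl⟩
    · intro h
      have h2 := e.symm.continuous.image_connectedComponent_subset (e y) ⟨e x, h, rfl⟩
      simpa using h2
  rw [connectedComponent_eq_iff_mem, connectedComponent_eq_iff_mem]
  exact key

variable {M N F : Type*} [TopologicalSpace M] [TopologicalSpace N] [TopologicalSpace F]
  {f : M → N} {U : Set N}

set_option linter.unusedSectionVars false in
theorem memU_of {v : N} (hv : v ∈ U) (z : f ⁻¹' {v}) : (z : M) ∈ f ⁻¹' U := by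
  rw [Set.mem_preimage, show f (z : M) = v from z.2]; exact hv

/-- The fiber of `f` over a point of a trivializing open set is equivalent to `F`. -/
noncomputable def fiberEquiv (φ : (f ⁻¹' U) ≃ₜ U × F)
    (hφ : ∀ x : f ⁻¹' U, ((φ x).1 : N) = f (x : M)) {v : N} (hv : v ∈ U) :
    (f ⁻¹' {v}) ≃ F where
  toFun z := (φ ⟨(z : M), memU_of hv z⟩).2
  invFun t := ⟨((φ.symm (⟨v, hv⟩, t) : f ⁻¹' U) : M), by
      rw [Set.mem_preimage, Set.mem_singleton_iff, ← hφ (φ.symm (⟨v, hv⟩, t)),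
        Homeomorph.apply_symm_apply]⟩
  left_inv z := by
      apply Subtype.ext
      show ((φ.symm (⟨v, hv⟩, (φ ⟨(z : M), memU_of hv z⟩).2) : f ⁻¹' U) : M) = (z : M)
      have h1 : ((φ ⟨(z : M), memU_of hv z⟩).1 : N) = v := by
        rw [hφ ⟨(z : M), memU_of hv z⟩]; exact z.2
      have key : ((⟨v, hv⟩, (φ ⟨(z : M), memU_of hv z⟩).2) : U × F) = φ ⟨(z : M), memU_of hv z⟩ :=
        Prod.ext (Subtype.ext h1.symm) rfl
      rw [key, Homeomorph.symm_apply_apply]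
  right_inv t := by
      show (φ (φ.symm (⟨v, hv⟩, t))).2 = t
      rw [Homeomorph.apply_symm_apply]

/-- The fiber of `f` over a point of a trivializing open set is homeomorphic to `F`. -/
noncomputable def fiberHomeo (φ : (f ⁻¹' U) ≃ₜ U × F)
    (hφ : ∀ x : f ⁻¹' U, ((φ x).1 : N) = f (x : M)) {v : N} (hv : v ∈ U) :
    (f ⁻¹' {v}) ≃ₜ F where
  toEquiv := fiberEquiv φ hφ hv
  continuous_toFun := continuous_snd.comp (φ.continuous.comp
      (Continuous.subtype_mk continuous_subtype_val (memU_of hv)))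
  continuous_invFun := Continuous.subtype_mk
      (continuous_subtype_val.comp (φ.symm.continuous.comp
        (continuous_const.prodMk continuous_id))) _

theorem ccIn_iff_mk_eq (φ : (f ⁻¹' U) ≃ₜ U × F)
    (hφ : ∀ x : f ⁻¹' U, ((φ x).1 : N) = f (x : M)) {v : N} (hv : v ∈ U)
    (x y : f ⁻¹' {v}) :
    connectedComponentIn (f ⁻¹' {v}) (x : M) = connectedComponentIn (f ⁻¹' {v}) (y : M) ↔
      ConnectedComponents.mk (fiberHomeo φ hφ hv x) =
        ConnectedComponents.mk (fiberHomeo φ hφ hv y) := by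
  have hmk : ∀ a b : F, (ConnectedComponents.mk a = ConnectedComponents.mk b)
      ↔ connectedComponent a = connectedComponent b := fun a b =>
    ConnectedComponents.coe_eq_coe
  rw [hmk, connectedComponentIn_eq_image x.2, connectedComponentIn_eq_image y.2,
    Set.image_eq_image Subtype.val_injective]
  exact homeo_cc_iff (fiberHomeo φ hφ hv) x y

theorem fiberSetoid_rel_iff (φ : (f ⁻¹' U) ≃ₜ U × F)
    (hφ : ∀ x : f ⁻¹' U, ((φ x).1 : N) = f (x : M)) {x y : M}
    (hx : f x ∈ U) (hy' : f y ∈ U) (hy : f y = f x) :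
    (fiberSetoid f).r x y ↔
      ConnectedComponents.mk ((φ ⟨x, hx⟩).2) = ConnectedComponents.mk ((φ ⟨y, hy'⟩).2) := by
  have h := ccIn_iff_mk_eq φ hφ hx (⟨x, rfl⟩ : f ⁻¹' {f x}) (⟨y, hy⟩ : f ⁻¹' {f x})
  constructor
  · rintro ⟨-, h2⟩
    exact h.mp h2
  · intro hmk
    exact ⟨hy.symm, h.mpr hmk⟩

end Aux

/-- Topological Stein factorization: a fiber bundle over a connected Hausdorff base whose
locally connected fiber has exactly `m` connected components factors as a map with connected
fibers followed by an `m`-sheeted covering map. -/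
theorem stein_factorization {M : Type u} {N : Type v} {F : Type w}
    [TopologicalSpace M] [TopologicalSpace N] [TopologicalSpace F]
    [ConnectedSpace N] [T2Space N] [LocallyConnectedSpace F]
    (m : ℕ) (hm : 0 < m) (hF : Nat.card (ConnectedComponents F) = m)
    (f : M → N) (hf : Continuous f) (hsurj : Function.Surjective f)
    (hbundle : IsLocTrivialBundle F f) :
    ∃ (N' : Type u) (_ : TopologicalSpace N') (g : M → N') (p : N' → N),
      Continuous g ∧ Function.Surjective g ∧
      (∀ x' : N', IsConnected (g ⁻¹' {x'})) ∧
      IsCoveringMap p ∧ (∀ y : N, Nat.card (p ⁻¹' {y}) = m) ∧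
      f = p ∘ g := by
  classical
  letI S : Setoid M := fiberSetoid f
  haveI : DiscreteTopology (ConnectedComponents F) := discrete_cc F
  obtain ⟨c₀⟩ : Nonempty (ConnectedComponents F) := (Nat.card_pos_iff.mp (hF ▸ hm)).1
  let rep : ConnectedComponents F → F := Function.surjInv ConnectedComponents.surjective_coe
  have hrep : ∀ c, ConnectedComponents.mk (rep c) = c := fun c =>
    Function.surjInv_eq ConnectedComponents.surjective_coe c
  let g : M → Quotient S := Quotient.mk'
  let p : Quotient S → N := Quotient.lift f fun a b hab => hab.1
  have hg : Continuous g := continuous_quotient_mk'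
  have hgsurj : Function.Surjective g := fun q => Quotient.inductionOn' q fun a => ⟨a, rfl⟩
  have hp : Continuous p := hf.quotient_lift _
  have main : ∀ y : N, IsEvenlyCovered p y (ConnectedComponents F) ∧
      Nat.card (p ⁻¹' {y}) = m := by
    intro y
    obtain ⟨U, hUo, hyU, φ, hφ⟩ := hbundle y
    obtain ⟨x₀, hx₀⟩ := hsurj y
    have hfz : ∀ (u : U) (t : F), f ((φ.symm (u, t) : f ⁻¹' U) : M) = (u : N) := fun u t => by
      rw [← hφ (φ.symm (u, t)), Homeomorph.apply_symm_apply]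
    set χ : M → ConnectedComponents F := fun x =>
      if h : f x ∈ U then ConnectedComponents.mk ((φ ⟨x, h⟩).2) else c₀ with hχdef
    have hχU : ∀ (x : M) (h : f x ∈ U), χ x = ConnectedComponents.mk ((φ ⟨x, h⟩).2) := by
      intro x h
      rw [hχdef]
      exact dif_pos h
    have hχnU : ∀ (x : M), ¬ f x ∈ U → χ x = c₀ := by
      intro x h
      rw [hχdef]
      exact dif_neg h
    have hχsound : ∀ a b : M, S.r a b → χ a = χ b := by
      intro a b hab
      by_cases ha : f a ∈ U
      · have hb : f b ∈ U := by rw [← hab.1]; exact ha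
        have hba : f b = f a := hab.1.symm
        rw [hχU a ha, hχU b hb]
        exact (fiberSetoid_rel_iff φ hφ ha hb hba).mp hab
      · have hb : ¬ f b ∈ U := by rw [← hab.1]; exact ha
        rw [hχnU a ha, hχnU b hb]
    let χ' : Quotient S → ConnectedComponents F := Quotient.lift χ hχsound
    -- saturated open sets
    set W : ConnectedComponents F → Set M := fun c => f ⁻¹' U ∩ χ ⁻¹' {c} with hWdef
    have hWdesc : ∀ c, W c = Subtype.val ''
        (⇑φ ⁻¹' (Set.univ ×ˢ (ConnectedComponents.mk ⁻¹' {c}))) := by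
      intro c
      ext x
      constructor
      · rintro ⟨hxU, hxc⟩
        refine ⟨⟨x, hxU⟩, ⟨Set.mem_univ _, ?_⟩, rfl⟩
        have hc : χ x = c := hxc
        rw [Set.mem_preimage, Set.mem_singleton_iff, ← hc, hχU x hxU]
      · rintro ⟨z, hz, rfl⟩
        refine ⟨z.2, ?_⟩
        have h2 : ConnectedComponents.mk ((φ z).2) = c := hz.2
        show χ (z : M) = c
        rw [hχU (z : M) z.2]
        exact h2
    have hWopen : ∀ c, IsOpen (W c) := by
      intro c
      rw [hWdesc]
      exact (hUo.preimage hf).isOpenMap_subtype_val _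
        (φ.continuous.isOpen_preimage _ (isOpen_univ.prod (ConnectedComponents.continuous_coe.isOpen_preimage _ (isOpen_discrete _))))
    have hWsat : ∀ c, g ⁻¹' (g '' W c) = W c := by
      intro c
      apply Set.Subset.antisymm
      · rintro x ⟨w, hw, hwx⟩
        have hr : S.r w x := Quotient.exact' hwx
        have h1 : χ w = χ x := hχsound w x hr
        have h2 : f w = f x := hr.1
        exact ⟨by rw [Set.mem_preimage, ← h2]; exact hw.1,
          by rw [Set.mem_preimage, Set.mem_singleton_iff, ← h1]; exact hw.2⟩
      · exact fun x hx => ⟨x, hx, rfl⟩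
    have hVopen : ∀ c, IsOpen (g '' W c) := by
      intro c
      rw [← isQuotientMap_quotient_mk'.isOpen_preimage]
      rw [show Quotient.mk' ⁻¹' (g '' W c) = W c from hWsat c]
      exact hWopen c
    have hχ'V : ∀ c, ∀ q ∈ g '' W c, χ' q = c := by
      rintro c q ⟨w, hw, rfl⟩
      exact hw.2
    have hχ'cont : ContinuousOn χ' (p ⁻¹' U) := by
      intro q hq
      apply ContinuousAt.continuousWithinAt
      obtain ⟨x, rfl⟩ := hgsurj q
      have hx : f x ∈ U := hq
      have hmem : g x ∈ g '' W (χ x) := ⟨x, ⟨hx, rfl⟩, rfl⟩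
      have hev : χ' =ᶠ[nhds (g x)] fun _ => χ x :=
        Filter.eventuallyEq_of_mem ((hVopen (χ x)).mem_nhds hmem) (hχ'V (χ x))
      exact hev.continuousAt
    -- key gluing fact
    have hgluing : ∀ (x : M) (hx : f x ∈ U) (t : F),
        ConnectedComponents.mk t = ConnectedComponents.mk ((φ ⟨x, hx⟩).2) →
        g ((φ.symm (⟨f x, hx⟩, t) : f ⁻¹' U) : M) = g x := by
      intro x hx t ht
      have hz : f ((φ.symm (⟨f x, hx⟩, t) : f ⁻¹' U) : M) = f x := hfz ⟨f x, hx⟩ t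
      have hzU : f ((φ.symm (⟨f x, hx⟩, t) : f ⁻¹' U) : M) ∈ U := by rw [hz]; exact hx
      apply Quotient.sound'
      apply Setoid.symm'
      refine (fiberSetoid_rel_iff φ hφ hx hzU hz).mpr ?_
      have h2 : (φ ⟨((φ.symm (⟨f x, hx⟩, t) : f ⁻¹' U) : M), hzU⟩).2 = t := by
        show (φ (φ.symm (⟨f x, hx⟩, t))).2 = t
        rw [Homeomorph.apply_symm_apply]
      rw [h2]
      exact ht.symm
    constructor
    · -- evenly covered
      refine IsEvenlyCovered.of_trivialization (t := {
        toFun := fun q => (p q, χ' q)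
        invFun := fun r => if h : r.1 ∈ U then
          g ((φ.symm (⟨r.1, h⟩, rep r.2) : f ⁻¹' U) : M) else g x₀
        source := p ⁻¹' U
        target := U ×ˢ Set.univ
        map_source' := fun q hq => ⟨hq, Set.mem_univ _⟩
        map_target' := by
          rintro ⟨u, c⟩ ⟨hu, -⟩
          simp only [dif_pos hu]
          show f ((φ.symm (⟨u, hu⟩, rep c) : f ⁻¹' U) : M) ∈ U
          rw [hfz ⟨u, hu⟩ (rep c)]
          exact hu
        left_inv' := by
          intro q hq
          obtain ⟨x, rfl⟩ := hgsurj q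
          have hx : f x ∈ U := hq
          show (if h : f x ∈ U then
            g ((φ.symm (⟨f x, h⟩, rep (χ' (g x))) : f ⁻¹' U) : M) else g x₀) = g x
          rw [dif_pos hx]
          have ht : ConnectedComponents.mk (rep (χ' (g x)))
              = ConnectedComponents.mk ((φ ⟨x, hx⟩).2) := by
            rw [hrep]
            exact hχU x hx
          exact hgluing x hx (rep (χ' (g x))) ht
        right_inv' := by
          rintro ⟨u, c⟩ ⟨hu, -⟩
          show (fun q => (p q, χ' q)) (if h : u ∈ U then
            g ((φ.symm (⟨u, h⟩, rep c) : f ⁻¹' U) : M) else g x₀) = (u, c)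
          rw [dif_pos hu]
          have hzU : f ((φ.symm (⟨u, hu⟩, rep c) : f ⁻¹' U) : M) ∈ U := by
            rw [hfz ⟨u, hu⟩ (rep c)]; exact hu
          have h1 : p (g ((φ.symm (⟨u, hu⟩, rep c) : f ⁻¹' U) : M)) = u :=
            hfz ⟨u, hu⟩ (rep c)
          have h2 : χ ((φ.symm (⟨u, hu⟩, rep c) : f ⁻¹' U) : M) = c := by
            rw [hχU _ hzU]
            rw [show (⟨((φ.symm (⟨u, hu⟩, rep c) : f ⁻¹' U) : M), hzU⟩ : f ⁻¹' U)
                = φ.symm (⟨u, hu⟩, rep c) from rfl, Homeomorph.apply_symm_apply]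
            exact hrep c
          show (p (g ((φ.symm (⟨u, hu⟩, rep c) : f ⁻¹' U) : M)),
            χ' (g ((φ.symm (⟨u, hu⟩, rep c) : f ⁻¹' U) : M))) = (u, c)
          rw [Prod.mk.injEq]
          exact ⟨h1, h2⟩
        open_source := hUo.preimage hp
        open_target := hUo.prod isOpen_univ
        continuousOn_toFun := hp.continuousOn.prodMk hχ'cont
        continuousOn_invFun := by
          rw [continuousOn_iff_continuous_restrict]
          have hres : (U ×ˢ Set.univ).domRestrict
              (fun r : N × ConnectedComponents F => if h : r.1 ∈ U then
                g ((φ.symm (⟨r.1, h⟩, rep r.2) : f ⁻¹' U) : M) else g x₀)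
              = fun q => g ((φ.symm (⟨q.1.1, q.2.1⟩, rep q.1.2) : f ⁻¹' U) : M) := by
            funext q
            exact dif_pos q.2.1
          rw [hres]
          apply hg.comp
          apply continuous_subtype_val.comp
          apply φ.symm.continuous.comp
          refine Continuous.prodMk (Continuous.subtype_mk ?_ _) ?_
          · exact continuous_fst.comp continuous_subtype_val
          · exact (continuous_of_discreteTopology (f := rep)).comp
              (continuous_snd.comp continuous_subtype_val)
        baseSet := U
        open_baseSet := hUo
        source_eq := rfl
        target_eq := rfl
        proj_toFun := fun q _ => rfl }) hyU
    · -- cardinality of the fiber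
      rw [← hF]
      apply Nat.card_congr
      refine Equiv.ofBijective (fun q : (p ⁻¹' {y} : Set (Quotient S)) => χ' q.1) ⟨?_, ?_⟩
      · rintro ⟨q1, hq1⟩ ⟨q2, hq2⟩ h
        obtain ⟨x1, rfl⟩ := hgsurj q1
        obtain ⟨x2, rfl⟩ := hgsurj q2
        have hf1 : f x1 = y := hq1
        have hf2 : f x2 = y := hq2
        have hx1 : f x1 ∈ U := by rw [hf1]; exact hyU
        have hx2 : f x2 ∈ U := by rw [hf2]; exact hyU
        have h21 : f x2 = f x1 := by rw [hf1, hf2]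
        apply Subtype.ext
        apply Quotient.sound'
        refine (fiberSetoid_rel_iff φ hφ hx1 hx2 h21).mpr ?_
        have e1 : χ x1 = ConnectedComponents.mk ((φ ⟨x1, hx1⟩).2) := hχU x1 hx1
        have e2 : χ x2 = ConnectedComponents.mk ((φ ⟨x2, hx2⟩).2) := hχU x2 hx2
        rw [← e1, ← e2]
        exact h
      · intro c
        have hzU : f ((φ.symm (⟨y, hyU⟩, rep c) : f ⁻¹' U) : M) ∈ U := by
          rw [hfz ⟨y, hyU⟩ (rep c)]; exact hyU
        refine ⟨⟨g ((φ.symm (⟨y, hyU⟩, rep c) : f ⁻¹' U) : M), ?_⟩, ?_⟩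
        · show p (g ((φ.symm (⟨y, hyU⟩, rep c) : f ⁻¹' U) : M)) ∈ ({y} : Set N)
          rw [Set.mem_singleton_iff]
          exact hfz ⟨y, hyU⟩ (rep c)
        · show χ ((φ.symm (⟨y, hyU⟩, rep c) : f ⁻¹' U) : M) = c
          rw [hχU _ hzU]
          rw [show (⟨((φ.symm (⟨y, hyU⟩, rep c) : f ⁻¹' U) : M), hzU⟩ : f ⁻¹' U)
              = φ.symm (⟨y, hyU⟩, rep c) from rfl, Homeomorph.apply_symm_apply]
          exact hrep c
  refine ⟨Quotient S, inferInstance, g, p, hg, hgsurj, ?_, ?_, ?_, ?_⟩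
  · intro x'
    obtain ⟨x, rfl⟩ := hgsurj x'
    have hset : g ⁻¹' {g x} = connectedComponentIn (f ⁻¹' {f x}) x := by
      ext z
      simp only [Set.mem_preimage, Set.mem_singleton_iff]
      constructor
      · intro hz
        obtain ⟨h1, h2⟩ := Quotient.exact' hz
        rw [h1] at h2
        have hm2 := mem_connectedComponentIn (show z ∈ f ⁻¹' {f x} from h1)
        rw [h2] at hm2
        exact hm2
      · intro hz
        apply Quotient.sound'
        have h0 : z ∈ f ⁻¹' {f x} := connectedComponentIn_subset _ _ hz
        have h1 : f z = f x := h0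
        refine ⟨h1, ?_⟩
        rw [h1]
        exact (connectedComponentIn_eq hz).symm
    rw [hset]
    exact ⟨⟨x, mem_connectedComponentIn rfl⟩, isPreconnected_connectedComponentIn⟩
  · intro y
    exact ((main y).1).to_isEvenlyCovered_preimage
  · intro y
    exact (main y).2
  · funext x
    rfl
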